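/- Let λ₁, λ₂, λ₃, λ₄ be pairwise distinct real numbers. Then the sum over unordered pairs {i,j} ⊆ {2,3,4} of 1/[(λ₁−λᵢ)(λ₁−λⱼ)·∏_{m≠i}(λₘ−λᵢ)·∏_{m≠j}(λₘ−λⱼ)] equals −(1/D²)·[(λ₄−λ₃)(λ₄−λ₂)(λ₄−λ₁)² + (λ₃−λ₄)(λ₃−λ₂)(λ₃−λ₁)² + (λ₂−λ₄)(λ₂−λ₃)(λ₂−λ₁)²], where D := ∏_{1≤i<j≤4} (λⱼ−λᵢ). -/

import Mathlib

theorem stmt_8 (l₁ l₂ l₃ l₄ : ℝ)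
    (hd : l₁ ≠ l₂ ∧ l₁ ≠ l₃ ∧ l₁ ≠ l₄ ∧ l₂ ≠ l₃ ∧ l₂ ≠ l₄ ∧ l₃ ≠ l₄) :
    let P₂ := (l₁ - l₂) * (l₃ - l₂) * (l₄ - l₂)
    let P₃ := (l₁ - l₃) * (l₂ - l₃) * (l₄ - l₃)
    let P₄ := (l₁ - l₄) * (l₂ - l₄) * (l₃ - l₄)
    let D := (l₂ - l₁) * (l₃ - l₁) * (l₄ - l₁) * (l₃ - l₂) * (l₄ - l₂) * (l₄ - l₃)
    1 / ((l₁ - l₂) * (l₁ - l₃) * P₂ * P₃) +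
      1 / ((l₁ - l₂) * (l₁ - l₄) * P₂ * P₄) +
      1 / ((l₁ - l₃) * (l₁ - l₄) * P₃ * P₄) =
    -(1 / D ^ 2) * ((l₄ - l₃) * (l₄ - l₂) * (l₄ - l₁) ^ 2 +
      (l₃ - l₄) * (l₃ - l₂) * (l₃ - l₁) ^ 2 +
      (l₂ - l₄) * (l₂ - l₃) * (l₂ - l₁) ^ 2) := by
  obtain ⟨h12, h13, h14, h23, h24, h34⟩ := hd
  have h12' : l₁ - l₂ ≠ 0 := sub_ne_zero.mpr h12
  have h13' : l₁ - l₃ ≠ 0 := sub_ne_zero.mpr h13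
  have h14' : l₁ - l₄ ≠ 0 := sub_ne_zero.mpr h14
  have h23' : l₂ - l₃ ≠ 0 := sub_ne_zero.mpr h23
  have h24' : l₂ - l₄ ≠ 0 := sub_ne_zero.mpr h24
  have h34' : l₃ - l₄ ≠ 0 := sub_ne_zero.mpr h34
  have h21' : l₂ - l₁ ≠ 0 := sub_ne_zero.mpr h12.symm
  have h31' : l₃ - l₁ ≠ 0 := sub_ne_zero.mpr h13.symm
  have h41' : l₄ - l₁ ≠ 0 := sub_ne_zero.mpr h14.symm
  have h32' : l₃ - l₂ ≠ 0 := sub_ne_zero.mpr h23.symm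
  have h42' : l₄ - l₂ ≠ 0 := sub_ne_zero.mpr h24.symm
  have h43' : l₄ - l₃ ≠ 0 := sub_ne_zero.mpr h34.symm
  intro P₂ P₃ P₄ D
  have hP₂ : P₂ ≠ 0 := mul_ne_zero (mul_ne_zero h12' h32') h42'
  have hP₃ : P₃ ≠ 0 := mul_ne_zero (mul_ne_zero h13' h23') h43'
  have hP₄ : P₄ ≠ 0 := mul_ne_zero (mul_ne_zero h14' h24') h34'
  have hD : D ≠ 0 := by
    refine mul_ne_zero (mul_ne_zero (mul_ne_zero (mul_ne_zero (mul_ne_zero h21' h31') h41') h32') h42') h43'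
  have hD2 : D ^ 2 ≠ 0 := pow_ne_zero _ hD
  have hA : (l₁ - l₂) * (l₁ - l₃) * P₂ * P₃ ≠ 0 :=
    mul_ne_zero (mul_ne_zero (mul_ne_zero h12' h13') hP₂) hP₃
  have hB : (l₁ - l₂) * (l₁ - l₄) * P₂ * P₄ ≠ 0 :=
    mul_ne_zero (mul_ne_zero (mul_ne_zero h12' h14') hP₂) hP₄
  have hC : (l₁ - l₃) * (l₁ - l₄) * P₃ * P₄ ≠ 0 :=
    mul_ne_zero (mul_ne_zero (mul_ne_zero h13' h14') hP₃) hP₄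
  have e1 : 1 / ((l₁ - l₂) * (l₁ - l₃) * P₂ * P₃) =
      -((l₄ - l₃) * (l₄ - l₂) * (l₄ - l₁) ^ 2) / D ^ 2 := by
    rw [div_eq_div_iff hA hD2]
    simp only [P₂, P₃, D]; ring
  have e2 : 1 / ((l₁ - l₂) * (l₁ - l₄) * P₂ * P₄) =
      -((l₃ - l₄) * (l₃ - l₂) * (l₃ - l₁) ^ 2) / D ^ 2 := by
    rw [div_eq_div_iff hB hD2]
    simp only [P₂, P₄, D]; ring
  have e3 : 1 / ((l₁ - l₃) * (l₁ - l₄) * P₃ * P₄) =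
      -((l₂ - l₄) * (l₂ - l₃) * (l₂ - l₁) ^ 2) / D ^ 2 := by
    rw [div_eq_div_iff hC hD2]
    simp only [P₃, P₄, D]; ring
  rw [e1, e2, e3, ← add_div, ← add_div, neg_mul, one_div_mul_eq_div,
    ← neg_div, div_eq_div_iff hD2 hD2]
  ring
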